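/- arXiv:2604.17777 — 2 statements merged into one kernel-verified Lean document; each statement's English description precedes it below -/
import Mathlib

section
/- There exists an absolute constant C > 0 such that for every n ≥ 3 and every pair of distinct indices i, j ∈ {1, …, n}, there is a word w in the free group F(a, b) on two generators whose evaluation at (a_n, b_n) equals the elementary transvection T_{i,j}, and whose freely reduced length satisfies ℓ(w) ≤ C · n². -/
open Matrix

/-- The `n × n` integer matrix unit `E_{i,j}`, with 1-based indices `i, j ∈ {1, …, n}`:
its `(r,s)` entry (0-based) is `1` when `r + 1 = i` and `s + 1 = j`, and `0` otherwise. -/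
def matUnit (n i j : ℕ) : Matrix (Fin n) (Fin n) ℤ :=
  Matrix.of fun r s => if r.val + 1 = i ∧ s.val + 1 = j then 1 else 0

/-- The elementary transvection `T_{i,j} = I_n + E_{i,j}` (1-based indices). -/
def Tmat (n i j : ℕ) : Matrix (Fin n) (Fin n) ℤ :=
  1 + matUnit n i j

/-- The sign `ε_n = (-1)^(n-1)`. -/
def eps (n : ℕ) : ℤ := (-1) ^ (n - 1)

/-- `a_n = Σ_{i=1}^{n-1} E_{i,i+1} + ε_n E_{n,1}`. -/
def aMat (n : ℕ) : Matrix (Fin n) (Fin n) ℤ :=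
  (∑ i ∈ Finset.range (n - 1), matUnit n (i + 1) (i + 2)) + eps n • matUnit n n 1

/-- `b_n = I_n + E_{2,1}`. -/
def bMat (n : ℕ) : Matrix (Fin n) (Fin n) ℤ :=
  1 + matUnit n 2 1

lemma matUnit_eq_std {n : ℕ} {i j : ℕ} (h1 : 1 ≤ i) (h2 : i ≤ n) (h3 : 1 ≤ j) (h4 : j ≤ n) :
    matUnit n i j = Matrix.single (⟨i-1, by omega⟩ : Fin n) (⟨j-1, by omega⟩ : Fin n) (1:ℤ) := by
  ext r s
  simp only [matUnit, of_apply, Matrix.single]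
  congr 1
  simp only [eq_iff_iff, Fin.ext_iff]
  omega

lemma eps_mul_eps (n : ℕ) : eps n * eps n = 1 := by
  rw [eps, ← pow_add]
  exact Even.neg_one_pow ⟨n-1, by ring⟩

lemma matUnit_mul_same {n i j l : ℕ} (h1 : 1 ≤ i) (h2 : i ≤ n) (h3 : 1 ≤ j) (h4 : j ≤ n)
    (h5 : 1 ≤ l) (h6 : l ≤ n) :
    matUnit n i j * matUnit n j l = matUnit n i l := by
  rw [matUnit_eq_std h1 h2 h3 h4, matUnit_eq_std h3 h4 h5 h6, matUnit_eq_std h1 h2 h5 h6,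
    Matrix.single_mul_single_same, one_mul]

lemma matUnit_mul_ne {n i j k l : ℕ} (h1 : 1 ≤ i) (h2 : i ≤ n) (h3 : 1 ≤ j) (h4 : j ≤ n)
    (h5 : 1 ≤ k) (h6 : k ≤ n) (h7 : 1 ≤ l) (h8 : l ≤ n) (hjk : j ≠ k) :
    matUnit n i j * matUnit n k l = 0 := by
  rw [matUnit_eq_std h1 h2 h3 h4, matUnit_eq_std h5 h6 h7 h8]
  apply Matrix.single_mul_single_of_ne
  simp only [Ne, Fin.ext_iff]
  omega

lemma aMat_mul_matUnit {n i j : ℕ} (h1 : 1 ≤ i) (h2 : i ≤ n - 1) (h3 : 1 ≤ j) (h4 : j ≤ n) :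
    aMat n * matUnit n (i+1) j = matUnit n i j := by
  have hn : 1 ≤ n := by omega
  rw [aMat, add_mul, Finset.sum_mul, smul_mul_assoc]
  have hz : matUnit n n 1 * matUnit n (i+1) j = 0 :=
    matUnit_mul_ne (by omega) (by omega) (by omega) (by omega) (by omega) (by omega) h3 h4 (by omega)
  rw [hz, smul_zero, add_zero]
  rw [Finset.sum_eq_single_of_mem (i-1) (Finset.mem_range.2 (by omega))]
  · have e1 : i - 1 + 1 = i := by omega
    have e2 : i - 1 + 2 = i + 1 := by omega
    rw [e1, e2]
    exact matUnit_mul_same h1 (by omega) (by omega) (by omega) h3 h4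
  · intro m hm hne
    have hm' := Finset.mem_range.1 hm
    exact matUnit_mul_ne (by omega) (by omega) (by omega) (by omega) (by omega) (by omega) h3 h4
      (by omega)

lemma aMat_mul_matUnit_one {n j : ℕ} (hn : 1 ≤ n) (h3 : 1 ≤ j) (h4 : j ≤ n) :
    aMat n * matUnit n 1 j = eps n • matUnit n n j := by
  rw [aMat, add_mul, Finset.sum_mul, smul_mul_assoc]
  have hz : ∀ m ∈ Finset.range (n-1), matUnit n (m+1) (m+2) * matUnit n 1 j = 0 := by
    intro m hm
    have hm' := Finset.mem_range.1 hm
    exact matUnit_mul_ne (by omega) (by omega) (by omega) (by omega) (by omega) (by omega) h3 h4 (by omega)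
  rw [Finset.sum_eq_zero hz, zero_add, matUnit_mul_same (by omega) (by omega) (by omega) (by omega) h3 h4]

lemma matUnit_mul_aMat {n i j : ℕ} (h1 : 1 ≤ i) (h2 : i ≤ n) (h3 : 1 ≤ j) (h4 : j ≤ n - 1) :
    matUnit n i j * aMat n = matUnit n i (j+1) := by
  have hn : 1 ≤ n := by omega
  rw [aMat, mul_add, Finset.mul_sum, mul_smul_comm]
  have hz : matUnit n i j * matUnit n n 1 = 0 :=
    matUnit_mul_ne h1 h2 h3 (by omega) (by omega) (by omega) (by omega) (by omega) (by omega)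
  rw [hz, smul_zero, add_zero]
  rw [Finset.sum_eq_single_of_mem (j-1) (Finset.mem_range.2 (by omega))]
  · have e1 : j - 1 + 1 = j := by omega
    have e2 : j - 1 + 2 = j + 1 := by omega
    rw [e1, e2]
    exact matUnit_mul_same h1 h2 h3 (by omega) (by omega) (by omega)
  · intro m hm hne
    have hm' := Finset.mem_range.1 hm
    exact matUnit_mul_ne h1 h2 h3 (by omega) (by omega) (by omega) (by omega) (by omega)
      (by omega)

lemma matUnit_mul_aMat_wrap {n i : ℕ} (h1 : 1 ≤ i) (h2 : i ≤ n) :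
    matUnit n i n * aMat n = eps n • matUnit n i 1 := by
  have hn : 1 ≤ n := by omega
  rw [aMat, mul_add, Finset.mul_sum, mul_smul_comm]
  have hz : ∀ m ∈ Finset.range (n-1), matUnit n i n * matUnit n (m+1) (m+2) = 0 := by
    intro m hm
    have hm' := Finset.mem_range.1 hm
    exact matUnit_mul_ne h1 h2 (by omega) (by omega) (by omega) (by omega) (by omega) (by omega) (by omega)
  rw [Finset.sum_eq_zero hz, zero_add, matUnit_mul_same h1 h2 (by omega) (by omega) (by omega) (by omega)]

lemma shift_step {n : ℕ} (c : ℤ) {i j : ℕ} (h1 : 1 ≤ i) (h2 : i ≤ n - 1) (h3 : 1 ≤ j)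
    (h4 : j ≤ n - 1) :
    (1 + c • matUnit n i j) * aMat n = aMat n * (1 + c • matUnit n (i+1) (j+1)) := by
  rw [add_mul, mul_add, one_mul, mul_one, smul_mul_assoc, mul_smul_comm,
    matUnit_mul_aMat h1 (by omega) h3 h4, aMat_mul_matUnit h1 h2 (by omega) (by omega)]

lemma shift_step_wrap {n : ℕ} (c : ℤ) {j : ℕ} (h3 : 1 ≤ j) (h4 : j ≤ n - 1) :
    (1 + c • matUnit n n j) * aMat n = aMat n * (1 + (eps n * c) • matUnit n 1 (j+1)) := by
  have hn : 1 ≤ n := by omega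
  rw [add_mul, mul_add, one_mul, mul_one, smul_mul_assoc, mul_smul_comm,
    matUnit_mul_aMat hn le_rfl h3 h4, aMat_mul_matUnit_one hn (by omega) (by omega)]
  rw [smul_smul, mul_comm (eps n) c, mul_assoc, eps_mul_eps, mul_one]

lemma tinv {n : ℕ} (c : ℤ) {i j : ℕ} (h1 : 1 ≤ i) (h2 : i ≤ n) (h3 : 1 ≤ j) (h4 : j ≤ n)
    (hij : i ≠ j) :
    (1 + c • matUnit n i j) * (1 + (-c) • matUnit n i j) = 1 := by
  have hz : matUnit n i j * matUnit n i j = 0 :=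
    matUnit_mul_ne h1 h2 h3 h4 h1 h2 h3 h4 (Ne.symm hij)
  have huv : (c • matUnit n i j) * ((-c) • matUnit n i j) = 0 := by
    rw [smul_mul_assoc, mul_smul_comm, hz, smul_zero, smul_zero]
  have hsum : (-c) • matUnit n i j + c • matUnit n i j = 0 := by
    rw [← add_smul, neg_add_cancel, zero_smul]
  rw [add_mul, one_mul, mul_add, mul_one, huv, add_zero, add_assoc, hsum, add_zero]

lemma tcomm {n : ℕ} {i k j : ℕ} (h1 : 1 ≤ i) (h2 : i ≤ n) (h3 : 1 ≤ k) (h4 : k ≤ n)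
    (h5 : 1 ≤ j) (h6 : j ≤ n) (hik : i ≠ k) (hkj : k ≠ j) (hij : i ≠ j) :
    (1 + matUnit n i k) * (1 + matUnit n k j) * (1 + (-1 : ℤ) • matUnit n i k)
      * (1 + (-1 : ℤ) • matUnit n k j) = 1 + matUnit n i j := by
  set X := matUnit n i k with hX
  set Y := matUnit n k j with hY
  have hXX : X * X = 0 := matUnit_mul_ne h1 h2 h3 h4 h1 h2 h3 h4 (Ne.symm hik)
  have hYY : Y * Y = 0 := matUnit_mul_ne h3 h4 h5 h6 h3 h4 h5 h6 (Ne.symm hkj)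
  have hYX : Y * X = 0 := matUnit_mul_ne h3 h4 h5 h6 h1 h2 h3 h4 (fun h => hij (h.symm))
  have hXY : X * Y = matUnit n i j := matUnit_mul_same h1 h2 h3 h4 h5 h6
  have s1 : (1 + X) * (1 + Y) = 1 + X + Y + X * Y := by noncomm_ring
  have s2 : (1 + X + Y + X * Y) * (1 + (-1 : ℤ) • X)
      = 1 + Y + X * Y + (-(X * X) + -(Y * X) + -(X * (Y * X))) := by
    rw [neg_smul, one_smul]
    noncomm_ring
  have s3 : (1 + Y + X * Y) * (1 + (-1 : ℤ) • Y)
      = 1 + X * Y + (-(Y * Y) + -(X * (Y * Y))) := by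
    rw [neg_smul, one_smul]
    noncomm_ring
  rw [s1, s2, hXX, hYX, mul_zero, neg_zero, add_zero, add_zero, add_zero, s3,
    hYY, mul_zero, neg_zero, add_zero, add_zero, hXY]

lemma SL_inv_coe {n : ℕ} (g : SpecialLinearGroup (Fin n) ℤ) (M : Matrix (Fin n) (Fin n) ℤ)
    (h : (↑g : Matrix (Fin n) (Fin n) ℤ) * M = 1) : (↑(g⁻¹) : Matrix (Fin n) (Fin n) ℤ) = M := by
  have h2 : (↑(g⁻¹) : Matrix (Fin n) (Fin n) ℤ) * ((↑g : Matrix (Fin n) (Fin n) ℤ) * M)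
      = ↑(g⁻¹) := by rw [h, mul_one]
  rw [← h2, ← mul_assoc, ← Matrix.SpecialLinearGroup.coe_mul, inv_mul_cancel,
    Matrix.SpecialLinearGroup.coe_one, one_mul]

lemma conj_coe {n : ℕ} (A g : SpecialLinearGroup (Fin n) ℤ) (N : Matrix (Fin n) (Fin n) ℤ)
    (h : (↑g : Matrix (Fin n) (Fin n) ℤ) * (↑A : Matrix (Fin n) (Fin n) ℤ)
      = (↑A : Matrix (Fin n) (Fin n) ℤ) * N) :
    (↑(A⁻¹ * g * A) : Matrix (Fin n) (Fin n) ℤ) = N := by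
  have hAA : (↑(A⁻¹) : Matrix (Fin n) (Fin n) ℤ) * (↑A : Matrix (Fin n) (Fin n) ℤ) = 1 := by
    rw [← Matrix.SpecialLinearGroup.coe_mul, inv_mul_cancel, Matrix.SpecialLinearGroup.coe_one]
  rw [Matrix.SpecialLinearGroup.coe_mul, Matrix.SpecialLinearGroup.coe_mul, mul_assoc, h, ← mul_assoc,
    hAA, one_mul]

lemma shift_iter {n : ℕ} (A : SpecialLinearGroup (Fin n) ℤ)
    (hA : (↑A : Matrix (Fin n) (Fin n) ℤ) = aMat n) :
    ∀ (k : ℕ) (c : ℤ) (i j : ℕ), 1 ≤ i → i + k ≤ n → 1 ≤ j → j + k ≤ n →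
      ∀ g : SpecialLinearGroup (Fin n) ℤ,
        (↑g : Matrix (Fin n) (Fin n) ℤ) = 1 + c • matUnit n i j →
        (↑((A⁻¹)^k * g * A^k) : Matrix (Fin n) (Fin n) ℤ)
          = 1 + c • matUnit n (i+k) (j+k) := by
  intro k
  induction k with
  | zero => intro c i j _ _ _ _ g hg; simpa using hg
  | succ k ih =>
      intro c i j h1 h2 h3 h4 g hg
      have step : (↑(A⁻¹ * g * A) : Matrix (Fin n) (Fin n) ℤ)
          = 1 + c • matUnit n (i+1) (j+1) := by
        apply conj_coe
        rw [hg, hA]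
        exact shift_step c h1 (by omega) h3 (by omega)
      have heq : (A⁻¹)^(k+1) * g * A^(k+1) = (A⁻¹)^k * (A⁻¹ * g * A) * A^k := by
        group
      have := ih c (i+1) (j+1) (by omega) (by omega) (by omega) (by omega) (A⁻¹ * g * A) step
      rw [heq, this]
      have e1 : i + 1 + k = i + (k+1) := by omega
      have e2 : j + 1 + k = j + (k+1) := by omega
      rw [e1, e2]

def evMap {n : ℕ} (A B : SpecialLinearGroup (Fin n) ℤ) :
    FreeGroup (Fin 2) →* SpecialLinearGroup (Fin n) ℤ :=
  FreeGroup.lift (fun t => if t = 0 then A else B)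

def RepW {n : ℕ} (A B : SpecialLinearGroup (Fin n) ℤ) (g : SpecialLinearGroup (Fin n) ℤ)
    (L : ℤ) : Prop :=
  ∃ w : FreeGroup (Fin 2), evMap A B w = g ∧ (FreeGroup.norm w : ℤ) ≤ L

lemma RepW.mul {n : ℕ} {A B g h : SpecialLinearGroup (Fin n) ℤ} {L L' : ℤ}
    (hg : RepW A B g L) (hh : RepW A B h L') : RepW A B (g * h) (L + L') := by
  obtain ⟨w, hw, hwl⟩ := hg
  obtain ⟨v, hv, hvl⟩ := hh
  refine ⟨w * v, by rw [_root_.map_mul, hw, hv], ?_⟩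
  have := FreeGroup.norm_mul_le w v
  omega

lemma RepW.inv {n : ℕ} {A B g : SpecialLinearGroup (Fin n) ℤ} {L : ℤ}
    (hg : RepW A B g L) : RepW A B g⁻¹ L := by
  obtain ⟨w, hw, hwl⟩ := hg
  exact ⟨w⁻¹, by rw [_root_.map_inv, hw], by rwa [FreeGroup.norm_inv_eq]⟩

lemma RepW.mono {n : ℕ} {A B g : SpecialLinearGroup (Fin n) ℤ} {L L' : ℤ}
    (hg : RepW A B g L) (h : L ≤ L') : RepW A B g L' := by
  obtain ⟨w, hw, hwl⟩ := hg
  exact ⟨w, hw, le_trans hwl h⟩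

lemma RepW.genA {n : ℕ} (A B : SpecialLinearGroup (Fin n) ℤ) : RepW A B A 1 :=
  ⟨FreeGroup.of 0, by simp [evMap], by simp⟩

lemma RepW.genB {n : ℕ} (A B : SpecialLinearGroup (Fin n) ℤ) : RepW A B B 1 :=
  ⟨FreeGroup.of 1, by simp [evMap], by simp⟩

lemma RepW.Apow {n : ℕ} (A B : SpecialLinearGroup (Fin n) ℤ) (k : ℕ) : RepW A B (A^k) k :=
  ⟨(FreeGroup.of 0)^k, by simp [evMap], by simp⟩

lemma RepW.Ainvpow {n : ℕ} (A B : SpecialLinearGroup (Fin n) ℤ) (k : ℕ) :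
    RepW A B ((A⁻¹)^k) k := by
  rw [inv_pow]
  exact (RepW.Apow A B k).inv

lemma key {n : ℕ} (hn : 3 ≤ n) (A B : SpecialLinearGroup (Fin n) ℤ)
    (hA : (↑A : Matrix (Fin n) (Fin n) ℤ) = aMat n)
    (hB : (↑B : Matrix (Fin n) (Fin n) ℤ) = bMat n) :
    ∀ d : ℕ, 1 ≤ d → d ≤ n - 1 →
      ∃ g : SpecialLinearGroup (Fin n) ℤ,
        (↑g : Matrix (Fin n) (Fin n) ℤ) = 1 + matUnit n (d+1) 1 ∧
        RepW A B g (8*(d:ℤ)^2 - 6*(d:ℤ)) := by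
  intro d
  induction d using Nat.strong_induction_on with
  | _ d ih =>
    intro hd1 hd2
    by_cases hd : d = 1
    · subst hd
      refine ⟨B, by rw [hB]; rfl, (RepW.genB A B).mono (by norm_num)⟩
    · have hd2' : 2 ≤ d := by omega
      set d2 := d / 2 with hd2def
      set d1 := d - d2 with hd1def
      have f1 : d1 + d2 = d := by omega
      have f2 : d2 ≤ d1 := by omega
      have f3 : d1 ≤ d2 + 1 := by omega
      have f4 : 1 ≤ d2 := by omega
      obtain ⟨g₁, hg₁, r₁⟩ := ih d1 (by omega) (by omega) (by omega)
      obtain ⟨g₂, hg₂, r₂⟩ := ih d2 (by omega) (by omega) (by omega)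
      set h := (A⁻¹)^d2 * g₁ * A^d2 with hhdef
      have hh : (↑h : Matrix (Fin n) (Fin n) ℤ)
          = 1 + (1:ℤ) • matUnit n (d1+1+d2) (1+d2) :=
        shift_iter A hA d2 1 (d1+1) 1 (by omega) (by omega) (by omega) (by omega) g₁
          (by rw [hg₁, one_smul])
      have e1 : d1 + 1 + d2 = d + 1 := by omega
      have e2 : 1 + d2 = d2 + 1 := by omega
      rw [e1, e2] at hh
      have hhinv : (↑(h⁻¹) : Matrix (Fin n) (Fin n) ℤ)
          = 1 + (-1:ℤ) • matUnit n (d+1) (d2+1) := by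
        apply SL_inv_coe
        rw [hh]
        exact tinv 1 (by omega) (by omega) (by omega) (by omega) (by omega)
      have hg₂inv : (↑(g₂⁻¹) : Matrix (Fin n) (Fin n) ℤ)
          = 1 + (-1:ℤ) • matUnit n (d2+1) 1 := by
        apply SL_inv_coe
        rw [hg₂]
        have := tinv (n := n) 1 (i := d2+1) (j := 1) (by omega) (by omega) (by omega)
          (by omega) (by omega)
        rwa [one_smul] at this
      refine ⟨h * g₂ * h⁻¹ * g₂⁻¹, ?_, ?_⟩
      · rw [Matrix.SpecialLinearGroup.coe_mul, Matrix.SpecialLinearGroup.coe_mul,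
          Matrix.SpecialLinearGroup.coe_mul, hh, hg₂, hhinv, hg₂inv, one_smul]
        exact tcomm (by omega) (by omega) (by omega) (by omega) (by omega) (by omega)
          (by omega) (by omega) (by omega)
      · have rh : RepW A B h ((d2:ℤ) + (8*(d1:ℤ)^2 - 6*(d1:ℤ)) + d2) :=
          ((RepW.Ainvpow A B d2).mul r₁).mul (RepW.Apow A B d2)
        have rtot := ((rh.mul r₂).mul rh.inv).mul r₂.inv
        apply rtot.mono
        have c1 : (d1:ℤ) + d2 = d := by exact_mod_cast congrArg (Nat.cast : ℕ → ℤ) f1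
        have c2 : (d2:ℤ) ≤ d1 := by exact_mod_cast f2
        have c3 : (d1:ℤ) ≤ d2 + 1 := by exact_mod_cast f3
        have c4 : (1:ℤ) ≤ d2 := by exact_mod_cast f4
        nlinarith [sq_nonneg ((d1:ℤ) - d2), c1, c2, c3, c4]

lemma main {n : ℕ} (hn : 3 ≤ n) (A B : SpecialLinearGroup (Fin n) ℤ)
    (hA : (↑A : Matrix (Fin n) (Fin n) ℤ) = aMat n)
    (hB : (↑B : Matrix (Fin n) (Fin n) ℤ) = bMat n)
    (i j : ℕ) (hi1 : 1 ≤ i) (hi2 : i ≤ n) (hj1 : 1 ≤ j) (hj2 : j ≤ n) (hij : i ≠ j) :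
    ∃ g : SpecialLinearGroup (Fin n) ℤ,
      (↑g : Matrix (Fin n) (Fin n) ℤ) = Tmat n i j ∧
      RepW A B g (8*(n:ℤ)^2 + 2*(n:ℤ)) := by
  rcases Nat.lt_or_ge j i with hlt | hge
  · -- i > j : lower triangular case
    set d := i - j with hddef
    obtain ⟨g, hg, r⟩ := key hn A B hA hB d (by omega) (by omega)
    set k := j - 1 with hkdef
    refine ⟨(A⁻¹)^k * g * A^k, ?_, ?_⟩
    · have := shift_iter A hA k 1 (d+1) 1 (by omega) (by omega) (by omega) (by omega) g
        (by rw [hg, one_smul])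
      rw [this, one_smul, Tmat]
      have e1 : d + 1 + k = i := by omega
      have e2 : 1 + k = j := by omega
      rw [e1, e2]
    · have rtot : RepW A B ((A⁻¹)^k * g * A^k)
          ((k:ℤ) + (8*(d:ℤ)^2 - 6*(d:ℤ)) + k) :=
        ((RepW.Ainvpow A B k).mul r).mul (RepW.Apow A B k)
      apply rtot.mono
      have c1 : (d:ℤ) ≤ (n:ℤ) - 1 := by
        have : d ≤ n - 1 := by omega
        omega
      have c2 : (k:ℤ) ≤ (n:ℤ) - 1 := by
        have : k ≤ n - 1 := by omega
        omega
      have c3 : (1:ℤ) ≤ d := by exact_mod_cast (show 1 ≤ d by omega)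
      have c4 : (3:ℤ) ≤ n := by exact_mod_cast hn
      nlinarith [c1, c2, c3, c4]
  · -- i < j : need wrap-around
    have hlt' : i < j := by omega
    set d := n + i - j with hddef
    have hd1 : 1 ≤ d := by omega
    have hdn : d ≤ n - 1 := by omega
    obtain ⟨g, hg, r⟩ := key hn A B hA hB d hd1 hdn
    set k₁ := n - 1 - d with hk1def
    set g₁ := (A⁻¹)^k₁ * g * A^k₁ with hg₁def
    have hcoe₁ : (↑g₁ : Matrix (Fin n) (Fin n) ℤ)
        = 1 + (1:ℤ) • matUnit n (d+1+k₁) (1+k₁) :=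
      shift_iter A hA k₁ 1 (d+1) 1 (by omega) (by omega) (by omega) (by omega) g
        (by rw [hg, one_smul])
    have e1 : d + 1 + k₁ = n := by omega
    have e2 : 1 + k₁ = n - d := by omega
    rw [e1, e2] at hcoe₁
    set g₂ := A⁻¹ * g₁ * A with hg₂def
    have hcoe₂ : (↑g₂ : Matrix (Fin n) (Fin n) ℤ)
        = 1 + (eps n * 1) • matUnit n 1 (n - d + 1) := by
      apply conj_coe
      rw [hcoe₁, hA]
      exact shift_step_wrap 1 (by omega) (by omega)
    rw [mul_one] at hcoe₂
    set g₃ := (A⁻¹)^(i-1) * g₂ * A^(i-1) with hg₃def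
    have hcoe₃ : (↑g₃ : Matrix (Fin n) (Fin n) ℤ)
        = 1 + eps n • matUnit n (1+(i-1)) ((n-d+1)+(i-1)) :=
      shift_iter A hA (i-1) (eps n) 1 (n-d+1) (by omega) (by omega) (by omega) (by omega)
        g₂ hcoe₂
    have e3 : 1 + (i-1) = i := by omega
    have e4 : (n-d+1) + (i-1) = j := by omega
    rw [e3, e4] at hcoe₃
    have rep₃ : RepW A B g₃
        (((i:ℤ)-1) + ((1 + ((k₁:ℤ) + (8*(d:ℤ)^2 - 6*(d:ℤ)) + k₁) + 1)) + ((i:ℤ)-1)) := by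
      have rg₁ : RepW A B g₁ ((k₁:ℤ) + (8*(d:ℤ)^2 - 6*(d:ℤ)) + k₁) :=
        ((RepW.Ainvpow A B k₁).mul r).mul (RepW.Apow A B k₁)
      have rg₂ : RepW A B g₂ (1 + ((k₁:ℤ) + (8*(d:ℤ)^2 - 6*(d:ℤ)) + k₁) + 1) := by
        have : RepW A B A⁻¹ 1 := (RepW.genA A B).inv
        exact (this.mul rg₁).mul (RepW.genA A B)
      have hc1 : ((i:ℤ)-1) = ((i-1 : ℕ) : ℤ) := by omega
      rw [hc1]
      exact ((RepW.Ainvpow A B (i-1)).mul rg₂).mul (RepW.Apow A B (i-1))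
    have hLbound : (((i:ℤ)-1) + ((1 + ((k₁:ℤ) + (8*(d:ℤ)^2 - 6*(d:ℤ)) + k₁) + 1)) + ((i:ℤ)-1))
        ≤ 8*(n:ℤ)^2 + 2*(n:ℤ) := by
      have c1 : (d:ℤ) ≤ (n:ℤ) - 1 := by omega
      have c2 : (k₁:ℤ) ≤ (n:ℤ) - 1 := by omega
      have c3 : (1:ℤ) ≤ d := by exact_mod_cast hd1
      have c4 : (3:ℤ) ≤ n := by exact_mod_cast hn
      have c5 : (i:ℤ) ≤ n := by exact_mod_cast hi2
      nlinarith [c1, c2, c3, c4, c5]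
    have heps : eps n = 1 ∨ eps n = -1 := by
      rcases Nat.even_or_odd (n-1) with he | ho
      · exact Or.inl (he.neg_one_pow)
      · exact Or.inr (ho.neg_one_pow)
    rcases heps with he | he
    · refine ⟨g₃, ?_, rep₃.mono hLbound⟩
      rw [hcoe₃, he, one_smul, Tmat]
    · refine ⟨g₃⁻¹, ?_, (rep₃.inv).mono hLbound⟩
      have : (↑(g₃⁻¹) : Matrix (Fin n) (Fin n) ℤ) = 1 + (1:ℤ) • matUnit n i j := by
        apply SL_inv_coe
        rw [hcoe₃, he]
        have := tinv (n := n) (-1) (i := i) (j := j) hi1 hi2 hj1 hj2 hij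
        rwa [neg_neg] at this
      rw [this, one_smul, Tmat]


/-- There is an absolute constant `C > 0` such that for every `n ≥ 3` and
all distinct 1-based indices `i, j ∈ {1, …, n}`, there is a word `w` in the free group
on two generators whose evaluation at `(a_n, b_n)` equals `T_{i,j}` and whose freely
reduced length is at most `C · n²`. -/
theorem transvection_words_quadratic :
    ∃ C : ℝ, 0 < C ∧
      ∀ n : ℕ, 3 ≤ n →
        ∀ A B : Matrix.SpecialLinearGroup (Fin n) ℤ,
          (A : Matrix (Fin n) (Fin n) ℤ) = aMat n →
          (B : Matrix (Fin n) (Fin n) ℤ) = bMat n →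
          ∀ i j : ℕ, 1 ≤ i → i ≤ n → 1 ≤ j → j ≤ n → i ≠ j →
            ∃ w : FreeGroup (Fin 2),
              ((FreeGroup.lift (fun t : Fin 2 => if t = 0 then A else B) w :
                  Matrix.SpecialLinearGroup (Fin n) ℤ) :
                  Matrix (Fin n) (Fin n) ℤ) = Tmat n i j ∧
              (w.toWord.length : ℝ) ≤ C * (n : ℝ) ^ 2 := by
  refine ⟨10, by norm_num, ?_⟩
  intro n hn A B hA hB i j hi1 hi2 hj1 hj2 hij
  obtain ⟨g, hg, w, hw, hl⟩ := main hn A B hA hB i j hi1 hi2 hj1 hj2 hij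
  refine ⟨w, ?_, ?_⟩
  · rw [show (FreeGroup.lift (fun t : Fin 2 => if t = 0 then A else B) w) = g from hw, hg]
  · have h1 : (w.toWord.length : ℤ) ≤ 8*(n:ℤ)^2 + 2*(n:ℤ) := hl
    have h2 : (w.toWord.length : ℝ) ≤ 8*(n:ℝ)^2 + 2*(n:ℝ) := by exact_mod_cast h1
    have h3 : (3:ℝ) ≤ (n:ℝ) := by exact_mod_cast hn
    nlinarith [h2, h3]
end

section
/- For every n ≥ 3, the element x_n := a_n · b_n has infinite order in SL_n(ℤ): x_n^m = I_n only when m = 0. -/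
open Matrix

section Aux

open Polynomial

lemma sum_ite_val {n : ℕ} (c : ℕ) (v : Fin n → ℤ) :
    (∑ s : Fin n, if (s : ℕ) = c then v s else 0) = if h : c < n then v ⟨c, h⟩ else 0 := by
  split
  · next h =>
    rw [Finset.sum_eq_single (⟨c, h⟩ : Fin n)]
    · simp
    · intro b _ hb
      simp only [ite_eq_right_iff]
      intro hbc
      exact absurd (Fin.ext hbc) hb
    · simp
  · next h =>
    apply Finset.sum_eq_zero
    intro s _
    have : (s : ℕ) ≠ c := by omega
    simp [this]

lemma aMat_apply {n : ℕ} (hn : 3 ≤ n) (r s : Fin n) :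
    aMat n r s = (if (s : ℕ) = (r : ℕ) + 1 then 1 else 0)
      + (if (r : ℕ) = n - 1 ∧ (s : ℕ) = 0 then eps n else 0) := by
  have hr := r.isLt
  have hs := s.isLt
  simp only [aMat, Matrix.add_apply, Matrix.sum_apply, Matrix.smul_apply, matUnit,
    Matrix.of_apply, smul_ite, smul_zero, smul_eq_mul, mul_one]
  congr 1
  · have : ∀ i ∈ Finset.range (n - 1),
        (if (r : ℕ) + 1 = i + 1 ∧ (s : ℕ) + 1 = i + 2 then (1:ℤ) else 0)
        = if i = (r : ℕ) then (if (s : ℕ) = (r : ℕ) + 1 then 1 else 0) else 0 := by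
      intro i _
      split_ifs <;> first | omega | (exfalso; tauto)
    rw [Finset.sum_congr rfl this, Finset.sum_ite_eq' (Finset.range (n - 1)) ((r : ℕ))]
    split_ifs with h1 h2 h2 <;> simp_all [Finset.mem_range] <;> omega
  · split_ifs <;> first | omega | (exfalso; tauto)

lemma bMat_apply {n : ℕ} (k s : Fin n) :
    bMat n k s = (if k = s then 1 else 0)
      + (if (k : ℕ) = 1 ∧ (s : ℕ) = 0 then 1 else 0) := by
  simp only [bMat, Matrix.add_apply, Matrix.one_apply, matUnit, Matrix.of_apply]
  congr 1
  split_ifs <;> first | omega | (exfalso; tauto)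

lemma xMat_apply {n : ℕ} (hn : 3 ≤ n) (r s : Fin n) :
    (aMat n * bMat n) r s = (if (s : ℕ) = (r : ℕ) + 1 then 1 else 0)
      + (if (r : ℕ) = 0 ∧ (s : ℕ) = 0 then 1 else 0)
      + (if (r : ℕ) = n - 1 ∧ (s : ℕ) = 0 then eps n else 0) := by
  rw [Matrix.mul_apply]
  have : ∀ k : Fin n, aMat n r k * bMat n k s
      = (if (k : ℕ) = (s : ℕ) then aMat n r k else 0)
        + (if (k : ℕ) = 1 then (if (s : ℕ) = 0 then aMat n r k else 0) else 0) := by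
    intro k
    rw [bMat_apply]
    have : (k = s) ↔ ((k : ℕ) = (s : ℕ)) := by exact ⟨fun h => by rw [h], fun h => Fin.ext h⟩
    rw [mul_add]
    congr 1
    · simp only [this]
      split_ifs <;> simp
    · rcases eq_or_ne ((k : ℕ)) 1 with h1 | h1 <;>
        rcases eq_or_ne ((s : ℕ)) 0 with h2 | h2 <;> simp [h1, h2]
  rw [Finset.sum_congr rfl (fun k _ => this k), Finset.sum_add_distrib,
    sum_ite_val, sum_ite_val]
  have hs := s.isLt
  rw [dif_pos hs, dif_pos (by omega : 1 < n)]
  rw [aMat_apply hn, aMat_apply hn]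
  have hr := r.isLt
  simp only [Fin.val_mk, Fin.eta, and_false, if_false]
  split_ifs <;> first | omega | (exfalso; tauto)

def fVec (n k : ℕ) : Fin n → ℤ := fun i =>
  (if (i : ℕ) = 0 then 1 else 0) + (if n - k ≤ (i : ℕ) then eps n else 0)

def gVec (n j : ℕ) : Fin n → ℤ := fun i => if (i : ℕ) = j then 1 else 0

lemma xMat_mulVec {n : ℕ} (hn : 3 ≤ n) (v : Fin n → ℤ) (i : Fin n) :
    ((aMat n * bMat n) *ᵥ v) i
      = (if h : (i : ℕ) + 1 < n then v ⟨(i : ℕ) + 1, h⟩ else 0)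
        + ((if (i : ℕ) = 0 then v ⟨0, by omega⟩ else 0)
        + (if (i : ℕ) = n - 1 then eps n * v ⟨0, by omega⟩ else 0)) := by
  have key : ∀ s : Fin n, (aMat n * bMat n) i s * v s
      = (if (s : ℕ) = (i : ℕ) + 1 then v s else 0)
        + ((if (i : ℕ) = 0 then (if (s : ℕ) = 0 then v s else 0) else 0)
        + (if (i : ℕ) = n - 1 then (if (s : ℕ) = 0 then eps n * v s else 0) else 0)) := by
    intro s
    rw [xMat_apply hn]
    split_ifs <;> first | omega | ring
  simp only [Matrix.mulVec, dotProduct]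
  rw [Finset.sum_congr rfl (fun s _ => key s), Finset.sum_add_distrib, Finset.sum_add_distrib,
    sum_ite_val]
  congr 1
  congr 1
  · by_cases h0 : (i : ℕ) = 0 <;>
      simp [h0, sum_ite_val, (by omega : 0 < n)]
  · by_cases h1 : (i : ℕ) = n - 1 <;>
      simp [h1, sum_ite_val 0 (fun s => eps n * v s), (by omega : 0 < n)]

lemma xMat_step {n : ℕ} (hn : 3 ≤ n) (k : ℕ) (hk : k < n) :
    (aMat n * bMat n) *ᵥ fVec n k = fVec n (k + 1) := by
  funext i
  rw [xMat_mulVec hn]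
  simp only [fVec, Fin.val_mk]
  have hi := i.isLt
  split_ifs <;> first | omega | (exfalso; tauto)

lemma xMat_pow_e0 {n : ℕ} (hn : 3 ≤ n) : ∀ k, k ≤ n →
    ((aMat n * bMat n) ^ k) *ᵥ gVec n 0 = fVec n k := by
  intro k
  induction k with
  | zero =>
    intro _
    funext i
    have hi := i.isLt
    simp only [pow_zero, Matrix.one_mulVec, gVec, fVec]
    have : ¬ (n - 0 ≤ (i : ℕ)) := by omega
    simp [this]
  | succ k ih =>
    intro hk
    rw [pow_succ', ← Matrix.mulVec_mulVec, ih (by omega), xMat_step hn k (by omega)]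

lemma xMat_shift {n : ℕ} (hn : 3 ≤ n) (j : ℕ) (hj1 : 1 ≤ j) (hjn : j < n) :
    (aMat n * bMat n) *ᵥ gVec n j = gVec n (j - 1) := by
  funext i
  rw [xMat_mulVec hn]
  simp only [gVec, Fin.val_mk]
  have hi := i.isLt
  split_ifs <;> omega

lemma xMat_pow_ej {n : ℕ} (hn : 3 ≤ n) : ∀ j, j < n →
    ((aMat n * bMat n) ^ j) *ᵥ gVec n j = gVec n 0 := by
  intro j
  induction j with
  | zero => intro _; simp [pow_zero, Matrix.one_mulVec]
  | succ j ih =>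
    intro hj
    rw [pow_succ, ← Matrix.mulVec_mulVec, xMat_shift hn (j + 1) (by omega) hj,
      Nat.add_sub_cancel]
    exact ih (by omega)

lemma col_formula {n : ℕ} (M : Matrix (Fin n) (Fin n) ℤ) (i j : Fin n) :
    M i j = (M *ᵥ gVec n (j : ℕ)) i := by
  simp only [Matrix.mulVec, dotProduct, gVec, mul_ite, mul_one, mul_zero]
  rw [sum_ite_val ((j : ℕ)) (fun s => M i s), dif_pos j.isLt, Fin.eta]

lemma xMat_key_identity {n : ℕ} (hn : 3 ≤ n) :
    (aMat n * bMat n) ^ n = (aMat n * bMat n) ^ (n - 1) + eps n • 1 := by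
  ext i j
  have hi := i.isLt
  have hj := j.isLt
  rw [Matrix.add_apply, Matrix.smul_apply, Matrix.one_apply,
    col_formula ((aMat n * bMat n) ^ n) i j, col_formula ((aMat n * bMat n) ^ (n - 1)) i j]
  have hsplit : ∀ m : ℕ, (j : ℕ) ≤ m → m ≤ n →
      (((aMat n * bMat n) ^ m) *ᵥ gVec n (j : ℕ)) i = fVec n (m - (j : ℕ)) i := by
    intro m hjm hmn
    have : (aMat n * bMat n) ^ m = (aMat n * bMat n) ^ (m - (j : ℕ)) * (aMat n * bMat n) ^ (j : ℕ) := by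
      rw [← pow_add]
      congr 1
      omega
    rw [this, ← Matrix.mulVec_mulVec, xMat_pow_ej hn (j : ℕ) hj, xMat_pow_e0 hn _ (by omega)]
  rw [hsplit n (by omega) le_rfl, hsplit (n - 1) (by omega) (by omega)]
  simp only [fVec, smul_eq_mul]
  have hij : (i = j) ↔ ((i : ℕ) = (j : ℕ)) := ⟨fun h => by rw [h], fun h => Fin.ext h⟩
  simp only [hij]
  split_ifs <;> omega

lemma xMat_trace {n : ℕ} (hn : 3 ≤ n) : Matrix.trace (aMat n * bMat n) = 1 := by
  rw [Matrix.trace]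
  have : ∀ i : Fin n, Matrix.diag (aMat n * bMat n) i = if (i : ℕ) = 0 then 1 else 0 := by
    intro i
    have hi := i.isLt
    rw [Matrix.diag_apply, xMat_apply hn]
    split_ifs <;> omega
  rw [Finset.sum_congr rfl (fun i _ => this i), sum_ite_val 0 (fun _ => 1),
    dif_pos (by omega : 0 < n)]

lemma charpoly_eval' {n : ℕ} (M : Matrix (Fin n) (Fin n) ℂ) (t : ℂ) :
    M.charpoly.eval t = (Matrix.diagonal (fun _ => t) - M).det := by
  rw [Matrix.charpoly, _root_.eval_det, Matrix.matPolyEquiv_charmatrix]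
  simp

lemma exists_eigenvec {n : ℕ} (M : Matrix (Fin n) (Fin n) ℂ) {μ : ℂ}
    (hμ : μ ∈ M.charpoly.roots) : ∃ v : Fin n → ℂ, v ≠ 0 ∧ M *ᵥ v = μ • v := by
  have hne : M.charpoly ≠ 0 := M.charpoly_monic.ne_zero
  have hroot : M.charpoly.IsRoot μ := (Polynomial.mem_roots hne).1 hμ
  have hdet : (Matrix.diagonal (fun _ => μ) - M).det = 0 := by
    rw [← charpoly_eval']; exact hroot
  obtain ⟨v, hv0, hv⟩ := (Matrix.exists_mulVec_eq_zero_iff).2 hdet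
  refine ⟨v, hv0, ?_⟩
  rw [Matrix.sub_mulVec] at hv
  have hd : Matrix.diagonal (fun _ => μ) *ᵥ v = μ • v := by
    funext i
    simp [Matrix.mulVec_diagonal]
  rw [hd] at hv
  linear_combination (norm := module) -hv

lemma pow_eigenvec {n : ℕ} (M : Matrix (Fin n) (Fin n) ℂ) {μ : ℂ} {v : Fin n → ℂ}
    (h : M *ᵥ v = μ • v) (k : ℕ) : (M ^ k) *ᵥ v = μ ^ k • v := by
  induction k with
  | zero => simp
  | succ k ih =>
    rw [pow_succ, ← Matrix.mulVec_mulVec, h, Matrix.mulVec_smul, ih, smul_smul, pow_succ, mul_comm]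

lemma abs_eps {n : ℕ} : ‖((eps n : ℤ) : ℂ)‖ = 1 := by
  have : ((eps n : ℤ) : ℂ) = (-1 : ℂ) ^ (n - 1) := by
    simp [eps]
  rw [this, norm_pow]
  simp

lemma root_re {n k : ℕ} (hn : 3 ≤ n) (hk : 0 < k) (M : Matrix (Fin n) (Fin n) ℂ)
    (hMk : M ^ k = 1) (hMid : M ^ n = M ^ (n - 1) + ((eps n : ℤ) : ℂ) • 1)
    {μ : ℂ} (hμ : μ ∈ M.charpoly.roots) : μ.re = 1 / 2 := by
  obtain ⟨v, hv0, hv⟩ := exists_eigenvec M hμ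
  obtain ⟨i, hi⟩ := Function.ne_iff.1 hv0
  simp only [Pi.zero_apply] at hi
  -- μ ^ k = 1
  have h1 : μ ^ k = 1 := by
    have := pow_eigenvec M hv k
    rw [hMk, Matrix.one_mulVec] at this
    have h := congrFun this i
    simp only [Pi.smul_apply, smul_eq_mul] at h
    have h' : (μ ^ k - 1) * v i = 0 := by linear_combination -h
    rcases mul_eq_zero.1 h' with h'' | h''
    · exact sub_eq_zero.1 h''
    · exact absurd h'' hi
  -- μ ^ n = μ ^ (n-1) + eps
  have h2 : μ ^ n = μ ^ (n - 1) + ((eps n : ℤ) : ℂ) := by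
    have hn' := pow_eigenvec M hv n
    have hn1 := pow_eigenvec M hv (n - 1)
    rw [hMid, Matrix.add_mulVec, hn1, Matrix.smul_mulVec, Matrix.one_mulVec] at hn'
    have := congrFun hn' i
    simp only [Pi.add_apply, Pi.smul_apply, smul_eq_mul] at this
    have h3 : (μ ^ n - μ ^ (n - 1) - ((eps n : ℤ) : ℂ)) * v i = 0 := by linear_combination -this
    rcases mul_eq_zero.1 h3 with h | h
    · linear_combination h
    · exact absurd h hi
  -- |μ| = 1
  have habs : ‖μ‖ = 1 := by
    have hpow : (‖μ‖) ^ k = 1 := by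
      rw [← norm_pow, h1, norm_one]
    have h0 : 0 ≤ ‖μ‖ := norm_nonneg μ
    rcases lt_trichotomy (‖μ‖) 1 with h | h | h
    · exact absurd hpow (by have := pow_lt_one₀ (n := k) h0 h (by omega); linarith)
    · exact h
    · exact absurd hpow (by have := one_lt_pow₀ (n := k) h (by omega); linarith)
  -- |μ - 1| = 1
  have habs1 : ‖μ - 1‖ = 1 := by
    have hfac : μ ^ (n - 1) * (μ - 1) = ((eps n : ℤ) : ℂ) := by
      have : μ ^ n = μ ^ (n - 1) * μ := by
        conv_lhs => rw [show n = (n - 1) + 1 by omega]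
        rw [pow_succ]
      rw [this] at h2
      ring_nf
      ring_nf at h2
      linear_combination h2
    have := congrArg (‖·‖) hfac
    rw [norm_mul, norm_pow, habs, one_pow, one_mul, abs_eps] at this
    exact this
  -- conclude
  have e1 : μ.re ^ 2 + μ.im ^ 2 = 1 := by
    have := congrArg (fun t : ℝ => t ^ 2) habs
    simp only [Complex.sq_norm, Complex.normSq_apply, one_pow] at this
    ring_nf at this ⊢
    linarith
  have e2 : (μ.re - 1) ^ 2 + μ.im ^ 2 = 1 := by
    have := congrArg (fun t : ℝ => t ^ 2) habs1
    simp only [Complex.sq_norm, Complex.normSq_apply, one_pow, Complex.sub_re, Complex.sub_im,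
      Complex.one_re, Complex.one_im] at this
    ring_nf at this ⊢
    linarith
  nlinarith [e1, e2]

lemma re_multiset_sum (s : Multiset ℂ) : Complex.re s.sum = (s.map Complex.re).sum := by
  have := map_multiset_sum Complex.reAddGroupHom s
  simpa [Complex.coe_reAddGroupHom] using this

lemma xMat_pow_ne_one {n : ℕ} (hn : 3 ≤ n) (k : ℕ) (hk : 0 < k) :
    (aMat n * bMat n) ^ k ≠ 1 := by
  intro hxk
  set x := aMat n * bMat n with hx
  set φ := (Int.castRingHom ℂ).mapMatrix (m := Fin n) with hφ
  set M := φ x with hM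
  have hMk : M ^ k = 1 := by rw [hM, ← map_pow, hxk, _root_.map_one]
  have hMid : M ^ n = M ^ (n - 1) + ((eps n : ℤ) : ℂ) • 1 := by
    have h := congrArg φ (xMat_key_identity hn)
    rw [map_pow, map_add, map_pow] at h
    have h2 : φ (eps n • (1 : Matrix (Fin n) (Fin n) ℤ)) = ((eps n : ℤ) : ℂ) • 1 := by
      ext i j
      simp only [hφ, RingHom.mapMatrix_apply, Matrix.map_apply, Matrix.smul_apply,
        Matrix.one_apply, smul_eq_mul]
      split_ifs <;> simp
    rw [h2] at h
    exact h
  have hMtr : M.trace = 1 := by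
    have h := (AddMonoidHom.map_trace (Int.castRingHom ℂ) x).symm
    have h2 : x.map ⇑(Int.castRingHom ℂ) = M := rfl
    rw [h2, xMat_trace hn] at h
    simpa using h
  have hsum : M.charpoly.roots.sum = 1 := by rw [← Matrix.trace_eq_sum_roots_charpoly, hMtr]
  have hcard : M.charpoly.roots.card = n := by
    rw [Polynomial.splits_iff_card_roots.1 (IsAlgClosed.splits M.charpoly),
      Matrix.charpoly_natDegree_eq_dim, Fintype.card_fin]
  have hre : ∀ μ ∈ M.charpoly.roots, μ.re = 1 / 2 := fun μ hμ => root_re hn hk M hMk hMid hμ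
  have hmap : M.charpoly.roots.map Complex.re = Multiset.replicate n (1 / 2 : ℝ) := by
    rw [Multiset.eq_replicate]
    refine ⟨by rw [Multiset.card_map, hcard], ?_⟩
    intro b hb
    obtain ⟨μ, hμ, rfl⟩ := Multiset.mem_map.1 hb
    exact hre μ hμ
  have hresum : (1 : ℂ).re = (M.charpoly.roots.map Complex.re).sum := by
    rw [← hsum, re_multiset_sum]
  rw [hmap, Multiset.sum_replicate, Complex.one_re] at hresum
  have h1 : (1 : ℝ) = n * (1 / 2) := by simpa [nsmul_eq_mul] using hresum
  have h2 : (n : ℝ) = 2 := by linarith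
  have h3 : n = 2 := by exact_mod_cast h2
  omega

end Aux

/-- For every `n ≥ 3`, the element `x_n = a_n · b_n` has infinite order in
`SL_n(ℤ)`: `x_n^m = I_n` only when `m = 0`. -/
theorem aMat_mul_bMat_infinite_order (n : ℕ) (hn : 3 ≤ n)
    (X : Matrix.SpecialLinearGroup (Fin n) ℤ)
    (hX : (X : Matrix (Fin n) (Fin n) ℤ) = aMat n * bMat n) :
    (∀ m : ℤ, X ^ m = 1 → m = 0) ∧ ¬ IsOfFinOrder X := by
  have key : ∀ k : ℕ, 0 < k → X ^ k ≠ 1 := by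
    intro k hk h1
    apply xMat_pow_ne_one hn k hk
    have h2 := congrArg
      (fun Y : Matrix.SpecialLinearGroup (Fin n) ℤ => (Y : Matrix (Fin n) (Fin n) ℤ)) h1
    simpa [Matrix.SpecialLinearGroup.coe_pow, hX] using h2
  constructor
  · intro m hm
    by_contra hm0
    have hk : 0 < m.natAbs := Int.natAbs_pos.2 hm0
    apply key m.natAbs hk
    rcases Int.natAbs_eq m with h | h
    · rw [← zpow_natCast, ← h, hm]
    · rw [h] at hm
      rw [← zpow_natCast]
      calc X ^ ((m.natAbs : ℕ) : ℤ) = (X ^ (-((m.natAbs : ℕ) : ℤ)))⁻¹ := by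
            rw [← _root_.zpow_neg, neg_neg]
        _ = 1 := by rw [hm, inv_one]
  · intro h
    exact key (orderOf X) h.orderOf_pos (pow_orderOf_eq_one X)
end
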